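/- For every x ∈ X^±, the language of idempotent words of FIM(X) that avoid x is context-free. -/

import Mathlib

/-- The symmetric alphabet `X^± = X ∪ X̄`, encoded as pairs (letter, sign). -/
abbrev Letter (X : Type) : Type := X × Bool

/-- Formal inverse of a letter. -/
def linv {X : Type} (a : Letter X) : Letter X := (a.1, !a.2)

/-- `wordInv v` is `v̄`: the reverse of `v` with every letter replaced by its inverse. -/
def wordInv {X : Type} (v : List (Letter X)) : List (Letter X) := v.reverse.map linv

/-- The vertex set of the Munn tree of `w`: reductions of all prefixes of `w` in FG(X). -/
def munn {X : Type} (w : List (Letter X)) : Set (FreeGroup X) :=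
  {g | ∃ p : List (Letter X), p <+: w ∧ FreeGroup.mk p = g}

/-- A word represents an idempotent of FIM(X) iff it reduces to 1 in FG(X). -/
def IsIdemWord {X : Type} (w : List (Letter X)) : Prop := FreeGroup.mk w = 1

/-- A word is reduced iff it has no adjacent mutually inverse letters. -/
def Reduced {X : Type} (w : List (Letter X)) : Prop :=
  List.Chain' (fun a b => b ≠ linv a) w

/-- The Munn tree of `w` contains the edge from (the reduced word) `p` to `p · a`. -/
def EdgeIn {X : Type} (w : List (Letter X)) (p : List (Letter X)) (a : Letter X) : Prop :=
  Reduced (p ++ [a]) ∧ FreeGroup.mk p ∈ munn w ∧ FreeGroup.mk (p ++ [a]) ∈ munn w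

/-- An idempotent word avoids `x` iff its Munn tree omits the edge `(ε, x)`. -/
def Avoids {X : Type} (w : List (Letter X)) (x : Letter X) : Prop := ¬ EdgeIn w [] x

/-- Equality in the free inverse monoid FIM(X): equality of Munn trees. -/
def EqFIM {X : Type} (u v : List (Letter X)) : Prop :=
  FreeGroup.mk u = FreeGroup.mk v ∧ munn u = munn v

/-- The alphabet `X^± ∪ {#}`. -/
abbrev HSym (X : Type) : Type := Letter X ⊕ Unit

/-- The hashSym symbol. -/
def hashSym {X : Type} : HSym X := Sum.inr ()

/-- `encode u v = u # v̄`. -/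
def encode {X : Type} (u v : List (Letter X)) : List (HSym X) :=
  u.map Sum.inl ++ hashSym :: (wordInv v).map Sum.inl


instance {T N : Type} [DecidableEq T] [DecidableEq N] : DecidableEq (ContextFreeRule T N) :=
  fun a b => decidable_of_iff (a.input = b.input ∧ a.output = b.output)
    (by cases a; cases b; simp)

/-- Interleaving `e₁x₁e₂x₂⋯e_mx_m`. -/
def interE {X : Type} (es : List (List (Letter X))) (xs : List (Letter X)) : List (Letter X) :=
  (List.zipWith (fun e x => e ++ [x]) es xs).flatten

/-- Interleaving `y₁f₁y₂f₂⋯y_nf_n`. -/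
def interF {X : Type} (ys : List (Letter X)) (fs : List (List (Letter X))) : List (Letter X) :=
  (List.zipWith (fun y f => y :: f) ys fs).flatten

/-- Derivability of a terminal word from a given nonterminal of a grammar. -/
def DerivesFrom {T : Type} (g : ContextFreeGrammar T) (n : g.NT) (w : List T) : Prop :=
  g.Derives [Symbol.nonterminal n] (w.map Symbol.terminal)

section IdemCF
set_option linter.unusedSectionVars false

open List

variable {X : Type} [DecidableEq X]

@[simp] lemma linv_linv (a : Letter X) : linv (linv a) = a := by
  cases a; simp [linv]

lemma linv_inj {a b : Letter X} (h : linv a = linv b) : a = b := by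
  have := congrArg linv h; simpa using this

lemma linv_eq_comm {a b : Letter X} : a = linv b ↔ b = linv a := by
  constructor <;> rintro rfl <;> simp

/-- Push a letter onto the (reversed) reduced-prefix stack. -/
def pushL (r : List (Letter X)) (a : Letter X) : List (Letter X) :=
  match r with
  | [] => [a]
  | b :: t => if b = linv a then t else a :: b :: t

@[simp] lemma pushL_nil (a : Letter X) : pushL [] a = [a] := rfl

@[simp] lemma pushL_cons (b : Letter X) (t : List (Letter X)) (a : Letter X) :
    pushL (b :: t) a = if b = linv a then t else a :: b :: t := rfl

/-- The reversed reduced form of a word. -/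
def stk (w : List (Letter X)) : List (Letter X) := w.foldl pushL []

@[simp] lemma stk_nil : stk ([] : List (Letter X)) = [] := rfl

lemma stk_concat (w : List (Letter X)) (a : Letter X) :
    stk (w ++ [a]) = pushL (stk w) a := by
  simp [stk, List.foldl_append]

@[simp] lemma stk_singleton (a : Letter X) : stk [a] = [a] := rfl

lemma mk_linv (a : Letter X) : FreeGroup.mk [linv a] = (FreeGroup.mk [a])⁻¹ := by
  rw [FreeGroup.inv_mk]
  simp [FreeGroup.invRev, linv]

lemma mk_cancel_mid (u v : List (Letter X)) (a : Letter X) :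
    FreeGroup.mk (u ++ linv a :: a :: v) = FreeGroup.mk (u ++ v) := by
  have h : FreeGroup.Red.Step (u ++ linv a :: a :: v) (u ++ v) :=
    @FreeGroup.Red.Step.not_rev X u v a.1 a.2
  exact FreeGroup.reduce.exact (FreeGroup.reduce.Step.eq h)

lemma mk_stk_aux : ∀ (w acc : List (Letter X)),
    FreeGroup.mk ((w.foldl pushL acc).reverse) = FreeGroup.mk (acc.reverse ++ w)
  | [], acc => by simp
  | a :: w, acc => by
    rw [List.foldl_cons, mk_stk_aux w (pushL acc a)]
    match acc with
    | [] => simp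
    | b :: t =>
      by_cases hb : b = linv a
      · subst hb
        rw [pushL_cons, if_pos rfl]
        rw [show (linv a :: t).reverse ++ a :: w = t.reverse ++ linv a :: a :: w by simp]
        rw [mk_cancel_mid]
      · rw [pushL_cons, if_neg hb]
        congr 1
        simp

lemma mk_stk (w : List (Letter X)) :
    FreeGroup.mk ((stk w).reverse) = FreeGroup.mk w := by
  simpa [stk] using mk_stk_aux w []

lemma pushL_chain {r : List (Letter X)} (h : r.Chain' (fun p q => p ≠ linv q))
    (a : Letter X) : (pushL r a).Chain' (fun p q => p ≠ linv q) := by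
  cases r with
  | nil => exact List.isChain_singleton _
  | cons b t =>
    by_cases hb : b = linv a
    · rw [pushL_cons, if_pos hb]
      exact h.tail
    · rw [pushL_cons, if_neg hb]
      exact List.IsChain.cons_cons (by rwa [Ne, linv_eq_comm]) h

lemma stk_chain (w : List (Letter X)) : (stk w).Chain' (fun p q => p ≠ linv q) := by
  induction w using List.reverseRecOn with
  | nil => exact List.isChain_nil
  | append_singleton w a ih => rw [stk_concat]; exact pushL_chain ih a

lemma reduce_eq_self : ∀ {l : List (Letter X)},
    l.Chain' (fun p q => q ≠ linv p) → FreeGroup.reduce l = l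
  | [], _ => rfl
  | [x], _ => rfl
  | x :: hd :: tl, h => by
    have hx : hd ≠ linv x := (List.isChain_cons_cons.mp h).1
    have ht := (List.isChain_cons_cons.mp h).2
    rw [FreeGroup.reduce.cons, reduce_eq_self ht]
    show (if x.1 = hd.1 ∧ x.2 = !hd.2 then tl else x :: hd :: tl) = x :: hd :: tl
    rw [if_neg]
    rintro ⟨h1, h2⟩
    exact hx (by cases x; cases hd; simp_all [linv])

lemma stk_reverse_eq_toWord (w : List (Letter X)) :
    (stk w).reverse = (FreeGroup.mk w).toWord := by
  rw [← mk_stk w, FreeGroup.toWord_mk, reduce_eq_self]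
  refine List.isChain_reverse.mpr ?_
  exact stk_chain w

lemma stk_eq_iff {u v : List (Letter X)} :
    stk u = stk v ↔ FreeGroup.mk u = FreeGroup.mk v := by
  constructor
  · intro h; rw [← mk_stk u, ← mk_stk v, h]
  · intro h
    have h2 := congrArg FreeGroup.toWord h
    rw [← stk_reverse_eq_toWord, ← stk_reverse_eq_toWord] at h2
    exact List.reverse_injective h2

lemma mk_eq_one_iff {u : List (Letter X)} : FreeGroup.mk u = 1 ↔ stk u = [] := by
  rw [show (1 : FreeGroup X) = FreeGroup.mk [] from rfl, ← stk_eq_iff, stk_nil]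

lemma mk_eq_single_iff {u : List (Letter X)} {c : Letter X} :
    FreeGroup.mk u = FreeGroup.mk [c] ↔ stk u = [c] := by
  rw [← stk_eq_iff, stk_singleton]

lemma single_ne_one (c : Letter X) : FreeGroup.mk [c] ≠ (1 : FreeGroup X) := by
  intro h; rw [mk_eq_one_iff] at h; simp at h

end IdemCF
section IdemCF2
set_option linter.unusedSectionVars false

open List

variable {X : Type} [DecidableEq X]

/-- The language of words reducing to 1 whose walk avoids the vertex `c`. -/
def LC (c : Letter X) : Language (Letter X) :=
  {u | FreeGroup.mk u = 1 ∧ ∀ p, p <+: u → FreeGroup.mk p ≠ FreeGroup.mk [c]}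

lemma prefix_append_cases {α : Type*} :
    ∀ {u : List α} {p v : List α}, p <+: u ++ v →
      p <+: u ∨ ∃ q, q <+: v ∧ p = u ++ q := by
  intro u
  induction u with
  | nil => intro p v h; exact Or.inr ⟨p, h, rfl⟩
  | cons a u ih =>
    intro p v h
    cases p with
    | nil => exact Or.inl (List.nil_prefix)
    | cons a' p =>
      rw [List.cons_append, List.cons_prefix_cons] at h
      obtain ⟨rfl, h⟩ := h
      rcases ih h with h1 | ⟨q, hq, rfl⟩
      · exact Or.inl (List.cons_prefix_cons.mpr ⟨rfl, h1⟩)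
      · exact Or.inr ⟨q, hq, rfl⟩

/-- If the walk of `u` never has reduced prefix exactly `[d]`, then no reduced prefix
ends (stack-wise) with `d`. -/
lemma stk_getLast_ne (d : Letter X) {u : List (Letter X)}
    (h : ∀ p, p <+: u → stk p ≠ [d]) :
    ∀ p, p <+: u → stk p = [] ∨ (stk p).getLast? ≠ some d := by
  intro p hp
  induction p using List.reverseRecOn with
  | nil => exact Or.inl rfl
  | append_singleton p a ih =>
    have hp' : p <+: u := (List.prefix_append p [a]).trans hp
    cases hs : stk p with
    | nil =>
      rw [stk_concat, hs, pushL_nil]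
      right
      intro hcon
      simp only [List.getLast?_singleton, Option.some.injEq] at hcon
      subst hcon
      exact h (p ++ [a]) hp (by rw [stk_concat, hs, pushL_nil])
    | cons b t =>
      have hlast : (b :: t).getLast? ≠ some d := by
        rcases ih hp' with h0 | h0
        · rw [hs] at h0; exact absurd h0 (by simp)
        · rw [hs] at h0; exact h0
      rw [stk_concat, hs, pushL_cons]
      by_cases hb : b = linv a
      · rw [if_pos hb]
        cases t with
        | nil => exact Or.inl rfl
        | cons c t' =>
          right
          rw [← List.getLast?_cons_cons]
          exact hlast
      · rw [if_neg hb]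
        right
        rw [List.getLast?_cons_cons]
        exact hlast

/-- In a run that never empties the stack, the bottom of the stack remains the first letter. -/
lemma stk_head_run (a : Letter X) :
    ∀ (m : List (Letter X)), (∀ q, q <+: m → stk (a :: q) ≠ []) →
      stk (a :: m) ≠ [] ∧ (stk (a :: m)).getLast? = some a := by
  intro m
  induction m using List.reverseRecOn with
  | nil => exact fun _ => ⟨by simp [stk], by simp [stk]⟩
  | append_singleton m l ih =>
    intro h
    obtain ⟨hne, hlast⟩ := ih (fun q hq => h q (hq.trans (List.prefix_append m [l])))
    have hstep : stk (a :: (m ++ [l])) = pushL (stk (a :: m)) l := by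
      rw [show a :: (m ++ [l]) = (a :: m) ++ [l] from rfl, stk_concat]
    cases hs : stk (a :: m) with
    | nil => exact absurd hs hne
    | cons b t =>
      rw [hs] at hlast hstep
      by_cases hb : b = linv l
      · have hres : stk (a :: (m ++ [l])) = t := by rw [hstep, pushL_cons, if_pos hb]
        have ht : t ≠ [] := by
          intro h0
          exact h (m ++ [l]) List.prefix_rfl (by rw [hres, h0])
        refine ⟨by rw [hres]; exact ht, ?_⟩
        rw [hres]
        cases t with
        | nil => exact absurd rfl ht
        | cons c t' => rw [← List.getLast?_cons_cons]; exact hlast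
      · have hres : stk (a :: (m ++ [l])) = l :: b :: t := by
          rw [hstep, pushL_cons, if_neg hb]
        refine ⟨by rw [hres]; simp, ?_⟩
        rw [hres, List.getLast?_cons_cons]
        exact hlast

lemma block_mk {u : List (Letter X)} (hu1 : FreeGroup.mk u = 1) (a : Letter X)
    (q : List (Letter X)) :
    FreeGroup.mk (a :: (u ++ linv a :: q)) = FreeGroup.mk q := by
  have heq : a :: (u ++ linv a :: q) = [a] ++ u ++ [linv a] ++ q := by simp
  rw [heq, ← FreeGroup.mul_mk, ← FreeGroup.mul_mk, ← FreeGroup.mul_mk, hu1, mk_linv]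
  group

/-- Soundness of the block rule. -/
lemma block_mem {a c : Letter X} (hac : a ≠ c) {u v : List (Letter X)}
    (hu : u ∈ LC (linv a)) (hv : v ∈ LC c) :
    a :: (u ++ linv a :: v) ∈ LC c := by
  obtain ⟨hu1, hu2⟩ := hu
  obtain ⟨hv1, hv2⟩ := hv
  refine ⟨by rw [block_mk hu1 a v, hv1], ?_⟩
  intro p hp
  cases p with
  | nil =>
    intro hcon
    exact single_ne_one c hcon.symm
  | cons a' p' =>
    rw [List.cons_prefix_cons] at hp
    obtain ⟨heq, hp'⟩ := hp
    rw [heq]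
    rcases prefix_append_cases hp' with h1 | ⟨q, hq, rfl⟩
    · -- p' <+: u
      intro hcon
      have hmkp : FreeGroup.mk p' = FreeGroup.mk [linv a, c] := by
        have h2 : FreeGroup.mk ([a] ++ p') = FreeGroup.mk [c] := hcon
        rw [← FreeGroup.mul_mk] at h2
        have h3 : FreeGroup.mk p' = (FreeGroup.mk [a])⁻¹ * FreeGroup.mk [c] := by
          rw [← h2]; group
        rw [h3, ← mk_linv, FreeGroup.mul_mk]
        rfl
      have hstk : stk p' = [c, linv a] := by
        rw [← stk_eq_iff] at hmkp
        rw [hmkp]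
        have : ¬ (linv a = linv c) := fun h => hac (linv_inj h)
        simp [stk, this]
      have hW := stk_getLast_ne (linv a)
        (fun q hqu hbad => hu2 q hqu (mk_eq_single_iff.mpr hbad)) p' h1
      rw [hstk] at hW
      rcases hW with h0 | h0
      · exact absurd h0 (by simp)
      · exact h0 (by simp)
    · -- p = a :: (u ++ q), q <+: linv a :: v
      cases q with
      | nil =>
        intro hcon
        rw [List.append_nil] at hcon
        have h2 : FreeGroup.mk ([a] ++ u) = FreeGroup.mk [c] := hcon
        rw [← FreeGroup.mul_mk, hu1, mul_one, mk_eq_single_iff] at h2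
        simp only [stk_singleton, List.cons.injEq] at h2
        exact hac h2.1
      | cons b q' =>
        rw [List.cons_prefix_cons] at hq
        obtain ⟨heq2, hq'⟩ := hq
        rw [heq2]
        rw [block_mk hu1 a q']
        exact hv2 q' hq'

end IdemCF2
section IdemCF3
set_option linter.unusedSectionVars false

open List

variable {X : Type} [Fintype X] [DecidableEq X]

def ruleNil (c : Letter X) : ContextFreeRule (Letter X) (Letter X) := ⟨c, []⟩

def ruleBlock (c a : Letter X) : ContextFreeRule (Letter X) (Letter X) :=
  ⟨c, [Symbol.terminal a, Symbol.nonterminal (linv a),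
       Symbol.terminal (linv a), Symbol.nonterminal c]⟩

def gramRules (X : Type) [Fintype X] [DecidableEq X] :
    Finset (ContextFreeRule (Letter X) (Letter X)) :=
  (Finset.univ.image ruleNil) ∪
  ((Finset.univ.filter fun p : Letter X × Letter X => p.2 ≠ p.1).image
      fun p => ruleBlock p.1 p.2)

/-- The grammar generating idempotent words avoiding `x`. -/
def gram (x : Letter X) : ContextFreeGrammar (Letter X) := ⟨Letter X, x, gramRules X⟩

lemma mem_gramRules_iff {r : ContextFreeRule (Letter X) (Letter X)} :
    r ∈ gramRules X ↔ (∃ c, r = ruleNil c) ∨ ∃ c a, a ≠ c ∧ r = ruleBlock c a := by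
  simp only [gramRules, Finset.mem_union, Finset.mem_image, Finset.mem_filter,
    Finset.mem_univ, true_and]
  constructor
  · rintro (⟨c, hc⟩ | ⟨⟨c, a⟩, hne, hr⟩)
    · exact Or.inl ⟨c, hc.symm⟩
    · exact Or.inr ⟨c, a, hne, hr.symm⟩
  · rintro (⟨c, rfl⟩ | ⟨c, a, hne, rfl⟩)
    · exact Or.inl ⟨c, rfl⟩
    · exact Or.inr ⟨⟨c, a⟩, hne, rfl⟩

lemma ruleNil_mem (c : Letter X) : ruleNil c ∈ gramRules X :=
  mem_gramRules_iff.mpr (Or.inl ⟨c, rfl⟩)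

lemma ruleBlock_mem {c a : Letter X} (h : a ≠ c) : ruleBlock c a ∈ gramRules X :=
  mem_gramRules_iff.mpr (Or.inr ⟨c, a, h, rfl⟩)

def symL : Symbol (Letter X) (Letter X) → Language (Letter X)
  | Symbol.terminal t => {[t]}
  | Symbol.nonterminal n => LC n

def formL (l : List (Symbol (Letter X) (Letter X))) : Language (Letter X) :=
  (l.map symL).prod

lemma formL_append (l1 l2 : List (Symbol (Letter X) (Letter X))) :
    formL (l1 ++ l2) = formL l1 * formL l2 := by
  simp [formL]

lemma formL_single (s : Symbol (Letter X) (Letter X)) : formL [s] = symL s := by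
  simp [formL]

lemma nil_mem_LC (c : Letter X) : ([] : List (Letter X)) ∈ LC c := by
  refine ⟨rfl, ?_⟩
  intro p hp
  rw [List.prefix_nil.mp hp]
  intro hcon
  exact single_ne_one c hcon.symm

lemma rule_sound {r : ContextFreeRule (Letter X) (Letter X)} (hr : r ∈ gramRules X) :
    formL r.output ≤ LC r.input := by
  rcases mem_gramRules_iff.mp hr with ⟨c, rfl⟩ | ⟨c, a, hac, rfl⟩
  · intro w hw
    simp only [ruleNil, formL, List.map_nil, List.prod_nil, Language.mem_one] at hw
    subst hw
    exact nil_mem_LC c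
  · intro w hw
    simp only [ruleBlock, formL, List.map_cons, List.map_nil, List.prod_cons,
      List.prod_nil, mul_one, symL] at hw
    replace hw := Language.mem_mul.mp hw
    obtain ⟨w1, hw1, w2, hw2, rfl⟩ := hw
    replace hw1 := Set.mem_singleton_iff.mp hw1
    subst hw1
    rw [Language.mem_mul] at hw2
    obtain ⟨u, hu, w3, hw3, rfl⟩ := hw2
    rw [Language.mem_mul] at hw3
    obtain ⟨w4, hw4, v, hv, rfl⟩ := hw3
    replace hw4 := Set.mem_singleton_iff.mp hw4
    subst hw4
    have : [a] ++ (u ++ ([linv a] ++ v)) = a :: (u ++ linv a :: v) := by simp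
    rw [this]
    exact block_mem hac hu hv

lemma produces_sound {x : Letter X} {s t : List (Symbol (Letter X) (Letter X))}
    (h : (gram x).Produces s t) : formL t ≤ formL s := by
  obtain ⟨r, hr, hrw⟩ := h
  obtain ⟨p, q, rfl, rfl⟩ := hrw.exists_parts
  erw [formL_append, formL_append, formL_append, formL_append, formL_single]
  exact mul_le_mul' (mul_le_mul' le_rfl (rule_sound hr)) le_rfl

lemma derives_le {x : Letter X} {s t : List (Symbol (Letter X) (Letter X))}
    (h : (gram x).Derives s t) : formL t ≤ formL s := by
  induction h with
  | refl => exact le_rfl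
  | tail _ hprod ih => exact (produces_sound hprod).trans ih

lemma self_mem_formL (w : List (Letter X)) :
    w ∈ formL (w.map (Symbol.terminal (N := Letter X))) := by
  induction w with
  | nil => exact Language.nil_mem_one
  | cons a w ih =>
    have : (a :: w).map (Symbol.terminal (N := Letter X)) =
        [Symbol.terminal a] ++ w.map Symbol.terminal := rfl
    rw [this, formL_append, formL_single]
    exact Language.append_mem_mul (l := symL (Symbol.terminal a)) rfl ih

lemma derives_sound {x : Letter X} {c : Letter X} {w : List (Letter X)}
    (h : (gram x).Derives [Symbol.nonterminal c] (w.map Symbol.terminal)) :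
    w ∈ LC c := by
  have := derives_le h (self_mem_formL w)
  erw [formL_single] at this; exact this

lemma mk_pair_one (a : Letter X) : FreeGroup.mk [a, linv a] = 1 := by
  rw [show [a, linv a] = [a] ++ [linv a] from rfl, ← FreeGroup.mul_mk, mk_linv]
  group

lemma derives_of_mem {x : Letter X} :
    ∀ (n : ℕ) (c : Letter X) (u : List (Letter X)), u.length ≤ n → u ∈ LC c →
      (gram x).Derives [Symbol.nonterminal c] (u.map Symbol.terminal) := by
  intro n
  induction n with
  | zero =>
    intro c u hlen _
    have hu : u = [] := List.length_eq_zero_iff.mp (Nat.le_zero.mp hlen)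
    subst hu
    exact (ContextFreeGrammar.Produces.single
      ⟨ruleNil c, ruleNil_mem c, ContextFreeRule.Rewrites.input_output⟩)
  | succ n ih =>
    intro c u hlen hu
    rcases u with _ | ⟨a, u'⟩
    · exact (ContextFreeGrammar.Produces.single
        ⟨ruleNil c, ruleNil_mem c, ContextFreeRule.Rewrites.input_output⟩)
    obtain ⟨hmk, hav⟩ := hu
    set w : List (Letter X) := a :: u' with hw
    have hPex : ∃ k, 0 < k ∧ k ≤ w.length ∧ stk (w.take k) = [] := by
      refine ⟨w.length, by simp [hw], le_rfl, ?_⟩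
      rw [List.take_length]
      exact mk_eq_one_iff.mp hmk
    classical
    set k := Nat.find hPex with hkdef
    obtain ⟨hk0, hkle, hke⟩ : 0 < k ∧ k ≤ w.length ∧ stk (w.take k) = [] :=
      Nat.find_spec hPex
    have hmin' : ∀ j, 0 < j → j < k → stk (w.take j) ≠ [] := by
      intro j hj0 hjk hnil
      exact Nat.find_min hPex hjk ⟨hj0, (hjk.le.trans hkle), hnil⟩
    -- k ≥ 2
    have hk2 : 2 ≤ k := by
      by_contra hcon
      have hk1' : k = 1 := by omega
      have hke1 : stk (w.take 1) = [] := by rw [← hk1']; exact hke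
      rw [show w.take 1 = [a] from rfl] at hke1
      simp at hke1
    have hk1 : k - 1 + 1 = k := Nat.succ_pred_eq_of_pos hk0
    have htake : w.take k = a :: u'.take (k - 1) := by
      rw [← hk1, hw]; rfl
    have hmalen : (u'.take (k-1)).length = k - 1 := by
      rw [List.length_take]
      have : k - 1 ≤ u'.length := by
        have : k ≤ u'.length + 1 := by simpa [hw] using hkle
        omega
      omega
    have hmane : u'.take (k-1) ≠ [] := by
      intro hcon
      rw [hcon] at hmalen
      simp at hmalen
      omega
    obtain ⟨m, b, hmb⟩ : ∃ m b, u'.take (k-1) = m ++ [b] := by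
      rcases List.eq_nil_or_concat (u'.take (k-1)) with h0 | ⟨m, b, h1⟩
      · exact absurd h0 hmane
      · exact ⟨m, b, by rw [h1]; simp⟩
    have hmlen : m.length = k - 2 := by
      have := hmb ▸ hmalen
      simp at this
      omega
    -- prefixes of a::q for q <+: m stay nonempty
    have hprefw : ∀ q : List (Letter X), q <+: m → (a :: q) <+: w := by
      intro q hq
      have h1 : a :: q <+: w.take k := by
        rw [htake, List.cons_prefix_cons]
        exact ⟨rfl, hq.trans (by rw [hmb]; exact List.prefix_append m [b])⟩
      exact h1.trans (List.take_prefix k w)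
    have hrun : ∀ q : List (Letter X), q <+: m → stk (a :: q) ≠ [] := by
      intro q hq
      have hpre := hprefw q hq
      have : a :: q = w.take (q.length + 1) := by
        have := List.prefix_iff_eq_take.mp hpre
        simpa using this
      rw [this]
      refine hmin' (q.length + 1) (Nat.succ_pos _) ?_
      have : q.length ≤ m.length := hq.length_le
      omega
    obtain ⟨hne, hlast⟩ := stk_head_run a m hrun
    -- final step analysis
    have hstk_e : stk ((a :: m) ++ [b]) = [] := by
      rw [show (a :: m) ++ [b] = a :: (m ++ [b]) from rfl, ← hmb, ← htake]
      exact hke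
    rw [stk_concat] at hstk_e
    have hstk_am : stk (a :: m) = [linv b] := by
      cases hs : stk (a :: m) with
      | nil => exact absurd hs hne
      | cons y t =>
        rw [hs, pushL_cons] at hstk_e
        by_cases hy : y = linv b
        · rw [if_pos hy] at hstk_e
          rw [hy, hstk_e]
        · rw [if_neg hy] at hstk_e
          simp at hstk_e
    have hb : b = linv a := by
      rw [hstk_am] at hlast
      simp only [List.getLast?_singleton, Option.some.injEq] at hlast
      rw [← hlast]
      simp
    -- m ∈ LC (linv a)
    have hmkam : FreeGroup.mk (a :: m) = FreeGroup.mk [a] := by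
      rw [← stk_eq_iff, hstk_am, hb, stk_singleton]
      simp
    have hmkm : FreeGroup.mk m = 1 := by
      have h1 : FreeGroup.mk ([a] ++ m) = FreeGroup.mk [a] := hmkam
      rw [← FreeGroup.mul_mk] at h1
      exact mul_left_cancel (a := FreeGroup.mk [a]) (by rw [mul_one]; exact h1)
    have hm_mem : m ∈ LC (linv a) := by
      refine ⟨hmkm, ?_⟩
      intro q hq hcon
      have h1 : FreeGroup.mk (a :: q) = 1 := by
        rw [show a :: q = [a] ++ q from rfl, ← FreeGroup.mul_mk, hcon, mk_linv]
        group
      exact hrun q hq (mk_eq_one_iff.mp h1)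
    -- v ∈ LC c
    set v : List (Letter X) := w.drop k with hv
    have hwev : w.take k ++ v = w := List.take_append_drop k w
    have hmke : FreeGroup.mk (w.take k) = 1 := mk_eq_one_iff.mpr hke
    have hmkv : FreeGroup.mk v = 1 := by
      have h1 : FreeGroup.mk (w.take k ++ v) = FreeGroup.mk w := by rw [hwev]
      rw [← FreeGroup.mul_mk, hmke, one_mul] at h1
      rw [h1]
      exact hmk
    have hv_mem : v ∈ LC c := by
      refine ⟨hmkv, ?_⟩
      intro q hq hcon
      obtain ⟨t, ht⟩ := hq
      have hpre : w.take k ++ q <+: w := by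
        refine ⟨t, ?_⟩
        rw [List.append_assoc, ht, hwev]
      refine hav (w.take k ++ q) hpre ?_
      rw [← FreeGroup.mul_mk, hmke, one_mul]
      exact hcon
    -- lengths
    have hwlen : w.length ≤ n + 1 := hlen
    have hmlen' : m.length ≤ n := by omega
    have hvlen : v.length ≤ n := by
      rw [hv, List.length_drop]
      omega
    have dm := ih (linv a) m hmlen' hm_mem
    have dv := ih c v hvlen hv_mem
    -- assemble the derivation
    have hrepr : w = a :: (m ++ linv a :: v) := by
      rw [← hwev, htake, hmb, hb]
      simp
    have step1 : (gram x).Produces [Symbol.nonterminal c] (ruleBlock c a).output := by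
      refine ⟨ruleBlock c a, ruleBlock_mem ?_, ContextFreeRule.Rewrites.input_output⟩
      intro hcon
      subst hcon
      exact hav [a] (by rw [hw]; exact ⟨u', rfl⟩) rfl
    have d1 : (gram x).Derives (ruleBlock c a).output
        ([Symbol.terminal a] ++ m.map Symbol.terminal ++
          ([Symbol.terminal (linv a)] ++ [Symbol.nonterminal c])) := by
      have h0 := (dm.append_right
          ([Symbol.terminal (linv a)] ++ [Symbol.nonterminal c])).append_left
          [Symbol.terminal a]
      have heq : (ruleBlock c a).output =
          [Symbol.terminal a] ++ ([Symbol.nonterminal (linv a)] ++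
            ([Symbol.terminal (linv a)] ++ [Symbol.nonterminal c])) := by
        simp [ruleBlock]
      rw [heq]
      exact h0
    have d2 : (gram x).Derives
        ([Symbol.terminal a] ++ m.map Symbol.terminal ++
          ([Symbol.terminal (linv a)] ++ [Symbol.nonterminal c]))
        ([Symbol.terminal a] ++ m.map Symbol.terminal ++
          ([Symbol.terminal (linv a)] ++ v.map Symbol.terminal)) := by
      have h0 := dv.append_left
          ([Symbol.terminal a] ++ m.map Symbol.terminal ++ [Symbol.terminal (linv a)])
      simp only [List.append_assoc] at h0; exact h0
    have dfinal := step1.trans_derives (d1.trans d2)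
    have : (a :: u').map (Symbol.terminal (N := Letter X)) =
        [Symbol.terminal a] ++ m.map Symbol.terminal ++
          ([Symbol.terminal (linv a)] ++ v.map Symbol.terminal) := by
      rw [show (a :: u' : List (Letter X)) = w from hw.symm, hrepr]
      simp
    convert dfinal using 1
    exact this

end IdemCF3

/-- For every `x ∈ X^±`, the language of idempotent words avoiding `x` is context-free. -/
theorem idemAvoiding_isContextFree {X : Type} [Fintype X] [DecidableEq X]
    (x : Letter X) :
    Language.IsContextFree
      ({w : List (Letter X) | IsIdemWord w ∧ Avoids w x} : Language (Letter X)) := by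
  classical
  refine ⟨gram x, ?_⟩
  ext w
  rw [ContextFreeGrammar.mem_language_iff]
  constructor
  · intro h
    obtain ⟨h1, h2⟩ : w ∈ LC x := derives_sound h
    refine ⟨h1, ?_⟩
    rintro ⟨hred, hmem0, hmemx⟩
    obtain ⟨p, hp, hpe⟩ := hmemx
    exact h2 p hp hpe
  · rintro ⟨h1, h2⟩
    apply derives_of_mem w.length x w le_rfl
    refine ⟨h1, ?_⟩
    intro p hp hcon
    exact h2 ⟨List.isChain_singleton _, ⟨[], List.nil_prefix, rfl⟩, ⟨p, hp, hcon⟩⟩
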